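/- arXiv:2409.06974 — 2 statements merged into one kernel-verified Lean document; each statement's English description precedes it below -/
import Mathlib

section
/- Let α be a finite alphabet and a ∈ α. The language L = {a^{2n} : n ≥ 0} of all words consisting of an even number of the letter a is a star language, a left-sided comet, and a right-sided comet, but L does not have the power-separating property (i.e., for every m ≥ 1 there is a word x such that the set {x^n : n ≥ m} neither is disjoint from L nor is contained in L). -/
open Language Computability

universe u

variable {α : Type}

/-- The n-fold repetition (power) of a word. -/
def wordPow (y : List α) : ℕ → List α
  | 0 => []
  | n + 1 => y ++ wordPow y n

/-- A star language: the Kleene star of some regular language. -/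
def IsStarLang (L : Language α) : Prop :=
  ∃ H : Language α, H.IsRegular ∧ L = H∗

/-- A left-sided comet. -/
def IsLeftComet (L : Language α) : Prop :=
  ∃ E G : Language α, E.IsRegular ∧ G.IsRegular ∧ G ≠ 0 ∧ G ≠ 1 ∧ L = E * G∗

/-- A right-sided comet. -/
def IsRightComet (L : Language α) : Prop :=
  ∃ G H : Language α, G.IsRegular ∧ H.IsRegular ∧ G ≠ 0 ∧ G ≠ 1 ∧ L = G∗ * H

/-- A two-sided comet. -/
def IsTwoComet (L : Language α) : Prop :=
  ∃ E G H : Language α, E.IsRegular ∧ G.IsRegular ∧ H.IsRegular ∧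
    G ≠ 0 ∧ G ≠ 1 ∧ L = E * G∗ * H

/-- A regular expression is union-free if it is built from the atoms `0` (empty language)
and single letters using only concatenation and Kleene star. -/
def RegularExpression.UnionFree : RegularExpression α → Prop
  | RegularExpression.zero => True
  | RegularExpression.epsilon => False
  | RegularExpression.char _ => True
  | RegularExpression.plus _ _ => False
  | RegularExpression.comp r s => r.UnionFree ∧ s.UnionFree
  | RegularExpression.star r => r.UnionFree

/-- A union-free language: the language of a union-free regular expression. -/
def IsUnionFree (L : Language α) : Prop :=
  ∃ r : RegularExpression α, r.UnionFree ∧ r.matches' = L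

/-- A monoidal language. -/
def IsMonoidal (L : Language α) : Prop := L = (⊤ : Language α)

/-- The language of one-letter words with letters from `X`. -/
def lettersLang (X : Set α) : Language α := {w : List α | ∃ a ∈ X, w = [a]}

/-- A combinational language: `⊤ · X` for a set `X` of one-letter words. -/
def IsCombinational (L : Language α) : Prop :=
  ∃ X : Set α, L = (⊤ : Language α) * lettersLang X

/-- A symmetric definite language: `E · ⊤ · H` with `E, H` regular. -/
def IsSymDef (L : Language α) : Prop :=
  ∃ E H : Language α, E.IsRegular ∧ H.IsRegular ∧ L = E * (⊤ : Language α) * H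

/-- A nilpotent language: finite or with finite complement. -/
def IsNilpotentLang (L : Language α) : Prop := L.Finite ∨ (Lᶜ : Language α).Finite

/-- A definite language: `A ∪ ⊤ · B` with `A, B` finite. -/
def IsDefinite (L : Language α) : Prop :=
  ∃ A B : Language α, A.Finite ∧ B.Finite ∧ L = A + (⊤ : Language α) * B  -- `+` of languages is union

/-- An ordered language: accepted by a DFA with linearly ordered state set
whose transition maps are all monotone. -/
def IsOrdered (L : Language α) : Prop :=
  ∃ (σ : Type) (_ : Fintype σ) (_ : LinearOrder σ) (M : DFA α σ),
    (∀ a : α, Monotone fun q => M.step q a) ∧ M.accepts = L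

/-- The non-counting property. -/
def HasNonCounting (L : Language α) : Prop :=
  ∃ k : ℕ, 1 ≤ k ∧ ∀ x y z : List α,
    (x ++ wordPow y k ++ z ∈ L ↔ x ++ wordPow y (k + 1) ++ z ∈ L)

/-- A non-counting (star-free) regular language. -/
def IsNonCounting (L : Language α) : Prop := L.IsRegular ∧ HasNonCounting L

/-- The power-separating property. -/
def HasPowerSep (L : Language α) : Prop :=
  ∃ m : ℕ, 1 ≤ m ∧ ∀ x : List α,
    (∀ n, m ≤ n → wordPow x n ∉ L) ∨ (∀ n, m ≤ n → wordPow x n ∈ L)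

/-- A power-separating regular language. -/
def IsPowerSep (L : Language α) : Prop := L.IsRegular ∧ HasPowerSep L

/-- A suffix-closed (regular) language. -/
def IsSuffixClosed (L : Language α) : Prop :=
  L.IsRegular ∧ ∀ x y : List α, x ++ y ∈ L → y ∈ L

/-- A circular (regular) language. -/
def IsCircular (L : Language α) : Prop :=
  L.IsRegular ∧ ∀ u v : List α, u ++ v ∈ L → v ++ u ∈ L

/-- A commutative (regular) language. -/
def IsCommutative (L : Language α) : Prop :=
  L.IsRegular ∧ ∀ w ∈ L, ∀ v : List α, w.Perm v → v ∈ L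

/-- The reversal of a language. -/
def Reversal (L : Language α) : Language α := {w : List α | ∃ v ∈ L, w = v.reverse}

/-- Two families of languages are incomparable if neither is contained in the other. -/
def Incomparable (P Q : Language α → Prop) : Prop :=
  (∃ L : Language α, P L ∧ ¬ Q L) ∧ (∃ L : Language α, Q L ∧ ¬ P L)

/-- A finite language. -/
def IsFiniteLang (L : Language α) : Prop := L.Finite

/-- The language of all words `a^(2n)`. -/
def evenPow (a : α) : Language α := {w : List α | ∃ n : ℕ, w = List.replicate (2 * n) a}



noncomputable section
open Classical in
def aaDFA (a : α) : DFA α (Fin 4) where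
  step q b := if q = 0 ∧ b = a then 1 else if q = 1 ∧ b = a then 2 else 3
  start := 0
  accept := {2}

lemma aaDFA_dead (a : α) (w : List α) : (aaDFA a).evalFrom 3 w = 3 := by
  induction w with
  | nil => rfl
  | cons b t ih =>
      have : (aaDFA a).step 3 b = 3 := by simp [aaDFA]
      simpa [DFA.evalFrom, this] using ih

lemma aaDFA_accepts (a : α) : (aaDFA a).accepts = ({[a, a]} : Language α) := by
  ext w
  rw [DFA.mem_accepts]
  constructor
  · intro hw
    have hw : (aaDFA a).evalFrom 0 w = 2 := hw
    match w with
    | [] => simp [DFA.evalFrom] at hw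
    | [b] =>
        simp only [DFA.evalFrom, List.foldl] at hw
        by_cases hb : b = a <;> simp [aaDFA, hb] at hw
    | [b, c] =>
        simp only [DFA.evalFrom, List.foldl] at hw
        by_cases hb : b = a
        · by_cases hc : c = a
          · subst hb; subst hc; exact rfl
          · simp [aaDFA, hb, hc] at hw
        · simp [aaDFA, hb] at hw
    | b :: c :: d :: t =>
        exfalso
        have h3 : (aaDFA a).step ((aaDFA a).step ((aaDFA a).step 0 b) c) d = 3 := by
          by_cases hb : b = a <;> by_cases hc : c = a <;> by_cases hd : d = a <;>
            simp [aaDFA, hb, hc, hd]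
        simp only [DFA.evalFrom, List.foldl] at hw
        rw [h3] at hw
        have := aaDFA_dead a t
        simp only [DFA.evalFrom] at this
        rw [this] at hw
        exact absurd hw (by decide)
  · intro hw
    have : w = [a, a] := hw
    subst this
    show (aaDFA a).evalFrom 0 [a, a] ∈ _
    simp [DFA.evalFrom, aaDFA]

def oneDFA : DFA α (Fin 2) where
  step _ _ := 1
  start := 0
  accept := {0}

lemma oneDFA_accepts : (oneDFA : DFA α (Fin 2)).accepts = (1 : Language α) := by
  ext w
  rw [DFA.mem_accepts]
  cases w with
  | nil => simp [DFA.eval, DFA.evalFrom, oneDFA, Language.mem_one]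
  | cons b t =>
      have : (oneDFA : DFA α (Fin 2)).evalFrom 1 t = 1 := by
        induction t with
        | nil => rfl
        | cons c s ih => simpa [DFA.evalFrom, oneDFA] using ih
      simp only [DFA.eval, DFA.evalFrom, List.foldl] at *
      rw [show (oneDFA : DFA α (Fin 2)).step oneDFA.start b = 1 from rfl, this]
      simp [oneDFA, Language.mem_one]

lemma evenPow_eq_star (a : α) : evenPow a = ({[a, a]} : Language α)∗ := by
  ext w
  constructor
  · rintro ⟨n, rfl⟩
    have : List.replicate (2 * n) a = (List.replicate n [a, a]).flatten := by
      induction n with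
      | zero => rfl
      | succ k ih =>
          rw [List.replicate_succ, List.flatten_cons, ← ih,
            show 2 * (k + 1) = 2 + 2 * k by ring, List.replicate_add]
          rfl
    rw [this]
    exact Language.join_mem_kstar (fun y hy => by
      exact (List.eq_of_mem_replicate hy))
  · intro hw
    rw [Language.mem_kstar] at hw
    obtain ⟨L, rfl, hL⟩ := hw
    refine ⟨L.length, ?_⟩
    induction L with
    | nil => rfl
    | cons y t ih =>
        have hy : y = [a, a] := hL y List.mem_cons_self
        rw [List.flatten_cons, hy, ih (fun z hz => hL z (List.mem_cons_of_mem _ hz)),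
          List.length_cons, show 2 * (t.length + 1) = 2 + 2 * t.length by ring,
          List.replicate_add]
        rfl

lemma wordPow_single (a : α) (n : ℕ) : wordPow [a] n = List.replicate n a := by
  induction n with
  | zero => rfl
  | succ k ih => simp [wordPow, ih, List.replicate_succ]

end

/-- `{a^(2n) : n ≥ 0}` is a star language, a left-sided comet and a right-sided comet,
but does not have the power-separating property. -/
theorem evenPow_star_comet_not_powerSep [Fintype α] (a : α) :
    IsStarLang (evenPow a) ∧ IsLeftComet (evenPow a) ∧ IsRightComet (evenPow a) ∧
    (∀ m : ℕ, 1 ≤ m → ∃ x : List α,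
      (∃ n : ℕ, m ≤ n ∧ wordPow x n ∈ evenPow a) ∧
      (∃ n : ℕ, m ≤ n ∧ wordPow x n ∉ evenPow a)) := by
  have hreg : ({[a, a]} : Language α).IsRegular := ⟨Fin 4, inferInstance, aaDFA a, aaDFA_accepts a⟩
  have honereg : (1 : Language α).IsRegular := ⟨Fin 2, inferInstance, oneDFA, oneDFA_accepts⟩
  have hne0 : ({[a, a]} : Language α) ≠ 0 := by
    intro h
    have : [a, a] ∈ ({[a, a]} : Language α) := rfl
    rw [h] at this
    exact this
  have hne1 : ({[a, a]} : Language α) ≠ 1 := by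
    intro h
    have : [a, a] ∈ ({[a, a]} : Language α) := rfl
    rw [h, Language.mem_one] at this
    simp at this
  refine ⟨⟨{[a, a]}, hreg, evenPow_eq_star a⟩,
    ⟨1, {[a, a]}, honereg, hreg, hne0, hne1, by rw [evenPow_eq_star a, one_mul]⟩,
    ⟨{[a, a]}, 1, hreg, honereg, hne0, hne1, by rw [evenPow_eq_star a, mul_one]⟩, ?_⟩
  intro m hm
  refine ⟨[a], ⟨2 * m, by omega, ⟨m, by rw [wordPow_single]⟩⟩,
    ⟨2 * m + 1, by omega, ?_⟩⟩
  rw [wordPow_single]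
  rintro ⟨k, hk⟩
  have := congrArg List.length hk
  simp at this
  omega
end

section
/- Let α be a finite alphabet with two distinct letters a and b. Then the following proper inclusions of families of languages over α hold: the monoidal languages are a proper subset of the symmetric definite languages; the symmetric definite languages are a proper subset of the left-sided comets and also a proper subset of the right-sided comets; and the left-sided comets as well as the right-sided comets are each a proper subset of the two-sided comets. -/
open Language Computability

universe u

variable {α : Type}

namespace CometAux

variable {α : Type}

lemma isRegular_of_dfa {σ : Type} [Fintype σ] (M : DFA α σ) :
    M.accepts.IsRegular :=
  ⟨ULift σ, inferInstance, DFA.reindex Equiv.ulift.symm M, DFA.accepts_reindex _ _⟩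

lemma exists_dfa {L : Language α} (h : L.IsRegular) :
    ∃ (σ : Type) (_ : Fintype σ), ∃ M : DFA α σ, M.accepts = L := by
  obtain ⟨σ, fin, M, hM⟩ := h
  exact ⟨Fin (Fintype.card σ), inferInstance, DFA.reindex (Fintype.equivFin σ) M,
    by rw [DFA.accepts_reindex]; exact hM⟩

open scoped Classical

noncomputable def catDFA {σ1 σ2 : Type} (M1 : DFA α σ1) (M2 : DFA α σ2) :
    DFA α (σ1 × Set σ2) where
  step := fun p c =>
    (M1.step p.1 c,
      (fun t => M2.step t c) '' p.2 ∪
        if M1.step p.1 c ∈ M1.accept then {M2.start} else ∅)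
  start := (M1.start, if M1.start ∈ M1.accept then {M2.start} else ∅)
  accept := {p | ∃ t ∈ p.2, t ∈ M2.accept}

lemma catDFA_eval {σ1 σ2 : Type} (M1 : DFA α σ1) (M2 : DFA α σ2) (w : List α) :
    (catDFA M1 M2).eval w =
      (M1.eval w, {q | ∃ x y, w = x ++ y ∧ x ∈ M1.accepts ∧ q = M2.eval y}) := by
  induction w using List.reverseRecOn with
  | nil =>
    refine Prod.ext rfl ?_
    show (if M1.start ∈ M1.accept then ({M2.start} : Set σ2) else ∅) =
      {q | ∃ x y, ([] : List α) = x ++ y ∧ x ∈ M1.accepts ∧ q = M2.eval y}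
    ext q
    constructor
    · intro hq
      split_ifs at hq with h
      · exact ⟨[], [], rfl, by rwa [DFA.mem_accepts], hq⟩
      · exact absurd hq (Set.notMem_empty q)
    · rintro ⟨x, y, hxy, hx, rfl⟩
      obtain ⟨rfl, rfl⟩ := List.append_eq_nil_iff.1 hxy.symm
      rw [DFA.mem_accepts] at hx
      have hx' : M1.start ∈ M1.accept := hx
      rw [if_pos hx']
      rfl
  | append_singleton w c ih =>
    rw [DFA.eval_append_singleton, ih]
    refine Prod.ext ?_ ?_
    · exact (DFA.eval_append_singleton M1 w c).symm
    · show ((fun t => M2.step t c) '' _ ∪ _) = _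
      ext q
      constructor
      · rintro (⟨t, ⟨x, y, rfl, hx, rfl⟩, rfl⟩ | hq)
        · exact ⟨x, y ++ [c], by rw [List.append_assoc], hx,
            (DFA.eval_append_singleton M2 y c).symm⟩
        · split_ifs at hq with h
          · refine ⟨w ++ [c], [], by simp, ?_, hq.symm ▸ rfl⟩
            rw [DFA.mem_accepts]
            exact (DFA.eval_append_singleton M1 w c).symm ▸ h
          · exact absurd hq (Set.notMem_empty q)
      · rintro ⟨x, y, hxy, hx, rfl⟩
        rcases List.eq_nil_or_concat y with rfl | ⟨y', c', rfl⟩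
        · rw [List.append_nil] at hxy
          subst hxy
          right
          have h : M1.step (M1.eval w) c ∈ M1.accept := by
            rw [← DFA.eval_append_singleton]
            exact (DFA.mem_accepts _).1 hx
          rw [if_pos h]
          rfl
        · rw [List.concat_eq_append, ← List.append_assoc] at hxy
          obtain ⟨h1, h2⟩ := List.append_inj' hxy rfl
          left
          refine ⟨M2.eval y', ⟨x, y', h1.symm ▸ rfl, hx, rfl⟩, ?_⟩
          have hc : c' = c := by simpa using h2.symm
          subst hc
          rw [List.concat_eq_append]
          exact (DFA.eval_append_singleton M2 y' c').symm

lemma catDFA_accepts {σ1 σ2 : Type} (M1 : DFA α σ1) (M2 : DFA α σ2) :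
    (catDFA M1 M2).accepts = M1.accepts * M2.accepts := by
  apply Language.ext
  intro w
  rw [Language.mem_mul, DFA.mem_accepts, catDFA_eval]
  constructor
  · rintro ⟨t, ⟨x, y, rfl, hx, rfl⟩, ht⟩
    exact ⟨x, hx, y, (DFA.mem_accepts M2).2 ht, rfl⟩
  · rintro ⟨x, hx, y, hy, rfl⟩
    exact ⟨M2.eval y, ⟨x, y, rfl, hx, rfl⟩, (DFA.mem_accepts M2).1 hy⟩

lemma isRegular_mul {L M : Language α} (hL : L.IsRegular) (hM : M.IsRegular) :
    (L * M).IsRegular := by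
  obtain ⟨σ1, f1, M1, rfl⟩ := exists_dfa hL
  obtain ⟨σ2, f2, M2, rfl⟩ := exists_dfa hM
  rw [← catDFA_accepts M1 M2]
  exact isRegular_of_dfa _

lemma isRegular_top : (⊤ : Language α).IsRegular := by
  have : (⟨fun _ _ => (), (), Set.univ⟩ : DFA α Unit).accepts = ⊤ := by
    apply Language.ext; intro w
    simp [DFA.mem_accepts]
    trivial
  rw [← this]; exact isRegular_of_dfa _

def oneDFA : DFA α Bool := ⟨fun _ _ => false, true, {true}⟩

lemma oneDFA_evalFrom (l : List α) : (oneDFA : DFA α Bool).evalFrom false l = false := by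
  induction l with
  | nil => rfl
  | cons c t ih => exact ih

lemma isRegular_one : (1 : Language α).IsRegular := by
  have : (oneDFA : DFA α Bool).accepts = 1 := by
    apply Language.ext; intro w
    rw [DFA.mem_accepts, Language.mem_one]
    cases w with
    | nil => simp [oneDFA, DFA.eval]
    | cons c t =>
      have h2 : (oneDFA : DFA α Bool).eval (c :: t) = false := oneDFA_evalFrom t
      rw [h2]
      simp [oneDFA]
  rw [← this]; exact isRegular_of_dfa _

lemma isRegular_zero : (0 : Language α).IsRegular := by
  have : (⟨fun _ _ => (), (), ∅⟩ : DFA α Unit).accepts = 0 := by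
    apply Language.ext; intro w
    simp [DFA.mem_accepts]
  rw [← this]; exact isRegular_of_dfa _

open scoped Classical in
noncomputable def charDFA (c : α) : DFA α (Fin 3) :=
  ⟨fun s x => if s = 0 ∧ x = c then 1 else 2, 0, {1}⟩

lemma charDFA_dead (c : α) (l : List α) : (charDFA c).evalFrom 2 l = 2 := by
  induction l with
  | nil => rfl
  | cons x t ih =>
    have hs : (charDFA c).step 2 x = 2 := by
      simp only [charDFA]
      rw [if_neg]; rintro ⟨h, -⟩; exact absurd h (by decide)
    show (charDFA c).evalFrom ((charDFA c).step 2 x) t = 2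
    rw [hs]; exact ih

lemma isRegular_char (c : α) : ({[c]} : Language α).IsRegular := by
  have key : (charDFA c).accepts = ({[c]} : Language α) := by
    apply Language.ext; intro w
    rw [DFA.mem_accepts]
    show _ ∈ ({1} : Set (Fin 3)) ↔ w ∈ ({[c]} : Set (List α))
    rw [Set.mem_singleton_iff, Set.mem_singleton_iff]
    cases w with
    | nil => simp [charDFA, DFA.eval, DFA.evalFrom]
    | cons x t =>
      by_cases hx : x = c
      · subst hx
        have hs : (charDFA x).step 0 x = 1 := by simp [charDFA]
        cases t with
        | nil =>
          show (charDFA x).evalFrom ((charDFA x).step 0 x) [] = 1 ↔ _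
          rw [hs]; simp [DFA.evalFrom]
        | cons y t' =>
          show (charDFA x).evalFrom ((charDFA x).step 0 x) (y :: t') = 1 ↔ _
          rw [hs]
          have hs2 : (charDFA x).step 1 y = 2 := by
            simp only [charDFA]
            rw [if_neg]; rintro ⟨h, -⟩; exact absurd h (by decide)
          show (charDFA x).evalFrom ((charDFA x).step 1 y) t' = 1 ↔ _
          rw [hs2, charDFA_dead]
          simp
      · have hs : (charDFA c).step 0 x = 2 := by
          simp only [charDFA]
          rw [if_neg]; rintro ⟨-, h⟩; exact hx h
        show (charDFA c).evalFrom ((charDFA c).step 0 x) t = 1 ↔ _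
        rw [hs, charDFA_dead]
        constructor
        · intro h; exact absurd h (by decide)
        · intro h; exact absurd (by injection h) hx
  rw [← key]; exact isRegular_of_dfa _

lemma char_ne_zero (c : α) : ({[c]} : Language α) ≠ 0 := by
  intro h
  exact Language.notMem_zero [c] (h ▸ rfl)

lemma char_ne_one (c : α) : ({[c]} : Language α) ≠ 1 := by
  intro h
  have : [c] ∈ (1 : Language α) := h ▸ rfl
  rw [Language.mem_one] at this
  exact List.cons_ne_nil c [] this

lemma single_mem_kstar {G : Language α} {g : List α} (hg : g ∈ G) : g ∈ G∗ := by
  rw [Language.mem_kstar]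
  exact ⟨[g], by simp, by simpa⟩

lemma exists_ne_nil {G : Language α} (h0 : G ≠ 0) (h1 : G ≠ 1) : ∃ g ∈ G, g ≠ [] := by
  by_contra h
  push_neg at h
  apply h1
  apply Language.ext
  intro w
  rw [Language.mem_one]
  constructor
  · exact h w
  · rintro rfl
    obtain ⟨g, hg⟩ := Set.nonempty_iff_ne_empty.2 (fun h => h0 h)
    have := h g hg
    rwa [this] at hg

lemma mem_kstar_single {c : α} {w : List α} (h : w ∈ ({[c]} : Language α)∗) :
    ∀ x ∈ w, x = c := by
  obtain ⟨L, rfl, hL⟩ := Language.mem_kstar.1 h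
  intro x hx
  obtain ⟨y, hy, hxy⟩ := List.mem_flatten.1 hx
  have hyL : y = [c] := hL y hy
  subst hyL
  simpa using hxy

end CometAux


namespace CometAux

variable {α : Type}

lemma astar_not_symdef (a b : α) (hab : a ≠ b) :
    ¬ IsSymDef (({[a]} : Language α)∗) := by
  rintro ⟨E, H, -, -, heq⟩
  have hnil : [] ∈ (({[a]} : Language α)∗) := Language.nil_mem_kstar _
  rw [heq] at hnil
  obtain ⟨u, hu, h', hh', -⟩ := Language.mem_mul.1 hnil
  obtain ⟨e, he, t, -, -⟩ := Language.mem_mul.1 hu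
  have hmem : e ++ [b] ++ h' ∈ E * (⊤ : Language α) * H :=
    Language.append_mem_mul (Language.append_mem_mul he trivial) hh'
  rw [← heq] at hmem
  exact hab (mem_kstar_single hmem b (by simp)).symm

lemma mem_lab {a b : α} {w : List α}
    (h : w ∈ (1 : Language α) * ({[a]} : Language α)∗ * {[b]}) :
    ∃ u, (∀ x ∈ u, x = a) ∧ w = u ++ [b] := by
  obtain ⟨p, hp, y, hy, rfl⟩ := Language.mem_mul.1 h
  obtain ⟨o, ho, u, hu, rfl⟩ := Language.mem_mul.1 hp
  have ho' : o = [] := (Language.mem_one o).mp ho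
  have hy' : y = [b] := Set.mem_singleton_iff.1 hy
  subst ho'; subst hy'
  exact ⟨u, mem_kstar_single hu, by simp⟩

lemma mem_ba {a b : α} {w : List α}
    (h : w ∈ ({[b]} : Language α) * ({[a]} : Language α)∗ * 1) :
    ∃ u, (∀ x ∈ u, x = a) ∧ w = [b] ++ u := by
  obtain ⟨p, hp, y, hy, rfl⟩ := Language.mem_mul.1 h
  obtain ⟨o, ho, u, hu, rfl⟩ := Language.mem_mul.1 hp
  have ho' : o = [b] := Set.mem_singleton_iff.1 ho
  have hy' : y = [] := (Language.mem_one y).mp hy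
  subst ho'; subst hy'
  exact ⟨u, mem_kstar_single hu, by simp⟩

lemma lab_not_leftComet (a b : α) (hab : a ≠ b) :
    ¬ IsLeftComet ((1 : Language α) * ({[a]} : Language α)∗ * {[b]}) := by
  rintro ⟨E, G, -, -, hG0, hG1, heq⟩
  obtain ⟨g, hg, hgnil⟩ := exists_ne_nil hG0 hG1
  have hbmem : [b] ∈ (1 : Language α) * ({[a]} : Language α)∗ * {[b]} := by
    have := Language.append_mem_mul (Language.append_mem_mul (Language.nil_mem_one (α := α))
      (Language.nil_mem_kstar ({[a]} : Language α))) (Set.mem_singleton ([b] : List α))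
    exact this
  have hE0 : E ≠ 0 := by
    intro h
    have hb := hbmem
    rw [heq, h, zero_mul] at hb
    exact Language.notMem_zero _ hb
  obtain ⟨e, he⟩ := Set.nonempty_iff_ne_empty.2
    (fun h => hE0 h)
  have heL : e ∈ (1 : Language α) * ({[a]} : Language α)∗ * {[b]} := by
    rw [heq]
    have := Language.append_mem_mul he (Language.nil_mem_kstar G)
    simpa using this
  have hegL : e ++ g ∈ (1 : Language α) * ({[a]} : Language α)∗ * {[b]} := by
    rw [heq]
    exact Language.append_mem_mul he (single_mem_kstar hg)
  obtain ⟨u, hu, rfl⟩ := mem_lab heL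
  obtain ⟨u', hu', h2⟩ := mem_lab hegL
  have hpfx : u ++ [b] <+: u' ++ [b] := ⟨g, h2⟩
  have hlen : (u ++ [b]).length ≤ u'.length := by
    have hl := congrArg List.length h2
    have hg1 : 1 ≤ g.length := List.length_pos_iff.2 hgnil
    simp [List.length_append] at hl ⊢
    omega
  have hpfx2 : u ++ [b] <+: u' :=
    List.prefix_of_prefix_length_le hpfx (List.prefix_append u' [b]) hlen
  have hbu' : b ∈ u' := hpfx2.subset (by simp)
  exact hab (hu' b hbu').symm

lemma ba_not_rightComet (a b : α) (hab : a ≠ b) :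
    ¬ IsRightComet (({[b]} : Language α) * ({[a]} : Language α)∗ * 1) := by
  rintro ⟨G, H, -, -, hG0, hG1, heq⟩
  obtain ⟨g, hg, hgnil⟩ := exists_ne_nil hG0 hG1
  have hbmem : [b] ∈ ({[b]} : Language α) * ({[a]} : Language α)∗ * 1 := by
    have := Language.append_mem_mul (Language.append_mem_mul
      (Set.mem_singleton ([b] : List α)) (Language.nil_mem_kstar ({[a]} : Language α)))
      (Language.nil_mem_one (α := α))
    exact this
  have hH0 : H ≠ 0 := by
    intro h
    have hb := hbmem
    rw [heq, h, mul_zero] at hb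
    exact Language.notMem_zero _ hb
  obtain ⟨h, hh⟩ := Set.nonempty_iff_ne_empty.2
    (fun h => hH0 h)
  have hhL : h ∈ ({[b]} : Language α) * ({[a]} : Language α)∗ * 1 := by
    rw [heq]
    have := Language.append_mem_mul (Language.nil_mem_kstar G) hh
    simpa using this
  have hghL : g ++ h ∈ ({[b]} : Language α) * ({[a]} : Language α)∗ * 1 := by
    rw [heq]
    exact Language.append_mem_mul (single_mem_kstar hg) hh
  obtain ⟨u, hu, rfl⟩ := mem_ba hhL
  obtain ⟨u', hu', h2⟩ := mem_ba hghL
  have hs1 : [b] ++ u <:+ [b] ++ u' := ⟨g, h2⟩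
  have hs2 : u' <:+ [b] ++ u' := ⟨[b], rfl⟩
  have hlen : ([b] ++ u).length ≤ u'.length := by
    have hl := congrArg List.length h2
    have hg1 : 1 ≤ g.length := List.length_pos_iff.2 hgnil
    simp [List.length_append] at hl ⊢
    omega
  have hsfx : [b] ++ u <:+ u' := List.suffix_of_suffix_length_le hs1 hs2 hlen
  have hbu' : b ∈ u' := hsfx.subset (by simp)
  exact hab (hu' b hbu').symm

end CometAux

/-- `MON ⊂ SYDEF ⊂ LCOM, RCOM ⊂ 2COM`: the chain of proper inclusions. -/
theorem mon_sydef_comets_chain [Fintype α] (a b : α) (hab : a ≠ b) :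
    (∀ L : Language α, IsMonoidal L → IsSymDef L) ∧
    (∃ L : Language α, IsSymDef L ∧ ¬ IsMonoidal L) ∧
    (∀ L : Language α, IsSymDef L → IsLeftComet L) ∧
    (∃ L : Language α, IsLeftComet L ∧ ¬ IsSymDef L) ∧
    (∀ L : Language α, IsSymDef L → IsRightComet L) ∧
    (∃ L : Language α, IsRightComet L ∧ ¬ IsSymDef L) ∧
    (∀ L : Language α, IsLeftComet L → IsTwoComet L) ∧
    (∃ L : Language α, IsTwoComet L ∧ ¬ IsLeftComet L) ∧
    (∀ L : Language α, IsRightComet L → IsTwoComet L) ∧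
    (∃ L : Language α, IsTwoComet L ∧ ¬ IsRightComet L) := by
  refine ⟨?_, ?_, ?_, ?_, ?_, ?_, ?_, ?_, ?_, ?_⟩
  -- MON ⊆ SYDEF
  · intro L hL
    exact ⟨1, 1, CometAux.isRegular_one, CometAux.isRegular_one, by rw [hL]; simp⟩
  -- SYDEF ⊄ MON
  · refine ⟨(⊤ : Language α) * {[a]}, ⟨1, {[a]}, CometAux.isRegular_one,
      CometAux.isRegular_char a, by rw [one_mul]⟩, ?_⟩
    intro h
    rw [IsMonoidal] at h
    have hnil : [] ∈ (⊤ : Language α) * {[a]} := by rw [h]; trivial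
    obtain ⟨x, -, y, hy, hxy⟩ := Language.mem_mul.1 hnil
    have hy' : y = [a] := Set.mem_singleton_iff.1 hy
    subst hy'
    simp at hxy
  -- SYDEF ⊆ LCOM
  · rintro L ⟨E, H, hE, hH, rfl⟩
    by_cases h0 : H = 0
    · subst h0
      exact ⟨0, {[a]}, CometAux.isRegular_zero, CometAux.isRegular_char a,
        CometAux.char_ne_zero a, CometAux.char_ne_one a, by simp⟩
    · obtain ⟨h, hh⟩ : ∃ h, h ∈ H :=
        Set.nonempty_iff_ne_empty.2 (fun h => h0 h)
      refine ⟨E * ⊤ * H, ⊤ * H,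
        CometAux.isRegular_mul (CometAux.isRegular_mul hE CometAux.isRegular_top) hH,
        CometAux.isRegular_mul CometAux.isRegular_top hH, ?_, ?_, ?_⟩
      · intro hz
        have hm : ([] : List α) ++ h ∈ (⊤ : Language α) * H :=
          Language.append_mem_mul trivial hh
        rw [hz] at hm
        exact Language.notMem_zero _ hm
      · intro hone
        have hm : [a] ++ h ∈ (⊤ : Language α) * H :=
          Language.append_mem_mul trivial hh
        rw [hone] at hm
        have := (Language.mem_one _).1 hm
        simp at this
      · have hle : (E * ⊤ * H) * ((⊤ : Language α) * H) ≤ E * ⊤ * H := by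
          have h1 : (E * ⊤ * H) * ((⊤ : Language α) * H) = E * (⊤ * (H * ⊤)) * H := by
            simp only [mul_assoc]
          rw [h1]
          exact mul_le_mul' (mul_le_mul' le_rfl le_top) le_rfl
        refine (le_antisymm (mul_kstar_le_self hle) ?_).symm
        calc E * ⊤ * H = (E * ⊤ * H) * 1 := (mul_one _).symm
          _ ≤ (E * ⊤ * H) * ((⊤ : Language α) * H)∗ :=
            mul_le_mul' le_rfl one_le_kstar
  -- LCOM ⊄ SYDEF
  · exact ⟨({[a]} : Language α)∗, ⟨1, {[a]}, CometAux.isRegular_one,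
      CometAux.isRegular_char a, CometAux.char_ne_zero a, CometAux.char_ne_one a,
      (one_mul _).symm⟩, CometAux.astar_not_symdef a b hab⟩
  -- SYDEF ⊆ RCOM
  · rintro L ⟨E, H, hE, hH, rfl⟩
    by_cases h0 : E = 0
    · subst h0
      exact ⟨{[a]}, 0, CometAux.isRegular_char a, CometAux.isRegular_zero,
        CometAux.char_ne_zero a, CometAux.char_ne_one a, by simp⟩
    · obtain ⟨e, he⟩ : ∃ e, e ∈ E :=
        Set.nonempty_iff_ne_empty.2 (fun h => h0 h)
      refine ⟨E * ⊤, E * ⊤ * H,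
        CometAux.isRegular_mul hE CometAux.isRegular_top,
        CometAux.isRegular_mul (CometAux.isRegular_mul hE CometAux.isRegular_top) hH,
        ?_, ?_, ?_⟩
      · intro hz
        have hm : e ++ ([] : List α) ∈ E * (⊤ : Language α) :=
          Language.append_mem_mul he trivial
        rw [hz] at hm
        exact Language.notMem_zero _ hm
      · intro hone
        have hm : e ++ [a] ∈ E * (⊤ : Language α) :=
          Language.append_mem_mul he trivial
        rw [hone] at hm
        have := (Language.mem_one _).1 hm
        simp at this
      · have hle : (E * (⊤ : Language α)) * (E * ⊤ * H) ≤ E * ⊤ * H := by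
          have h1 : (E * (⊤ : Language α)) * (E * ⊤ * H) = E * (⊤ * (E * ⊤)) * H := by
            simp only [mul_assoc]
          rw [h1]
          exact mul_le_mul' (mul_le_mul' le_rfl le_top) le_rfl
        refine (le_antisymm (kstar_mul_le_self hle) ?_).symm
        calc E * ⊤ * H = 1 * (E * ⊤ * H) := (one_mul _).symm
          _ ≤ (E * (⊤ : Language α))∗ * (E * ⊤ * H) :=
            mul_le_mul' one_le_kstar le_rfl
  -- RCOM ⊄ SYDEF
  · exact ⟨({[a]} : Language α)∗, ⟨{[a]}, 1, CometAux.isRegular_char a,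
      CometAux.isRegular_one, CometAux.char_ne_zero a, CometAux.char_ne_one a,
      (mul_one _).symm⟩, CometAux.astar_not_symdef a b hab⟩
  -- LCOM ⊆ 2COM
  · rintro L ⟨E, G, hE, hG, h0, h1, rfl⟩
    exact ⟨E, G, 1, hE, hG, CometAux.isRegular_one, h0, h1, (mul_one _).symm⟩
  -- 2COM ⊄ LCOM
  · exact ⟨(1 : Language α) * ({[a]} : Language α)∗ * {[b]},
      ⟨1, {[a]}, {[b]}, CometAux.isRegular_one, CometAux.isRegular_char a,
        CometAux.isRegular_char b, CometAux.char_ne_zero a, CometAux.char_ne_one a, rfl⟩,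
      CometAux.lab_not_leftComet a b hab⟩
  -- RCOM ⊆ 2COM
  · rintro L ⟨G, H, hG, hH, h0, h1, rfl⟩
    exact ⟨1, G, H, CometAux.isRegular_one, hG, hH, h0, h1, by rw [one_mul]⟩
  -- 2COM ⊄ RCOM
  · exact ⟨({[b]} : Language α) * ({[a]} : Language α)∗ * 1,
      ⟨{[b]}, {[a]}, 1, CometAux.isRegular_char b, CometAux.isRegular_char a,
        CometAux.isRegular_one, CometAux.char_ne_zero a, CometAux.char_ne_one a, rfl⟩,
      CometAux.ba_not_rightComet a b hab⟩
end
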